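/- For the action of G = Z/2 × Z/2 on A: ω₁ and ω₄ are fixed points of the G-action; g₃.ωᵢ = ωᵢ for all i = 1,2,3,4; g₂.ω₂ = ω₃; and G acts simply transitively on the set {η₁, η₂, η₃, η₄}: setting η_{gᵢ} := ηᵢ, one has gᵢ.η_{g_j} = η_{gᵢg_j} for all i, j. -/
import Mathlib


open MvPolynomial TensorProduct

/-- The defining ideal of the first example: generated by `x⁴ - 1` and
`y² - (1/2)(1 + ζx + x² - ζx³)`. -/
noncomputable def firstRelIdeal (K : Type*) [Field K] (ζ : K) :
    Ideal (MvPolynomial (Fin 2) K) :=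
  Ideal.span {X 0 ^ 4 - 1,
    X 1 ^ 2 - C ((2 : K)⁻¹) * (1 + C ζ * X 0 + X 0 ^ 2 - C ζ * X 0 ^ 3)}

/-- The first example: the commutative `K`-algebra generated by commuting elements `x`, `y`
subject to `x⁴ = 1` and `y² = (1/2)(1 + ζx + x² - ζx³)`. -/
abbrev FirstAlg (K : Type*) [Field K] (ζ : K) : Type _ :=
  MvPolynomial (Fin 2) K ⧸ firstRelIdeal K ζ

/-- The generator `x` of the first example. -/
noncomputable def xF (K : Type*) [Field K] (ζ : K) : FirstAlg K ζ :=
  Ideal.Quotient.mk (firstRelIdeal K ζ) (X 0)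

/-- The generator `y` of the first example. -/
noncomputable def yF (K : Type*) [Field K] (ζ : K) : FirstAlg K ζ :=
  Ideal.Quotient.mk (firstRelIdeal K ζ) (X 1)

/-- The group `G = ℤ/2 × ℤ/2`, written multiplicatively. -/
abbrev GG : Type := Multiplicative (ZMod 2 × ZMod 2)

/-- `g₁ = (0,0)`. -/
def g1 : GG := Multiplicative.ofAdd (0, 0)
/-- `g₂ = (1,0)`. -/
def g2 : GG := Multiplicative.ofAdd (1, 0)
/-- `g₃ = (0,1)`. -/
def g3 : GG := Multiplicative.ofAdd (0, 1)
/-- `g₄ = (1,1)`. -/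
def g4 : GG := Multiplicative.ofAdd (1, 1)

/-- The twisted multiplication of `A ⊗̂ A`:
`(a ⊗ b)(a' ⊗ b') = (1/4) ∑_{g,g'} θ(g,g') (a (g.a')) ⊗ ((g'.b) b')`,
extended bilinearly. -/
noncomputable def twMul {K : Type*} [Field K] {B : Type*} [Ring B] [Algebra K B]
    {G : Type*} [Monoid G] [Fintype G]
    (ρ : G →* (B →ₐ[K] B)) (θ : G → G → K)
    (z w : B ⊗[K] B) : B ⊗[K] B :=
  (4 : K)⁻¹ • ∑ g : G, ∑ g' : G, θ g g' •
    (TensorProduct.map (LinearMap.mul' K B) (LinearMap.mul' K B))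
      ((TensorProduct.tensorTensorTensorComm K B B B B)
        ((TensorProduct.map
            (TensorProduct.map LinearMap.id (ρ g').toLinearMap)
            (TensorProduct.map (ρ g).toLinearMap LinearMap.id))
          (z ⊗ₜ[K] w)))

/-- `ω₁ := 1`. -/
noncomputable def w1F (K : Type*) [Field K] (ζ : K) : FirstAlg K ζ := 1

/-- `ω₂ := (1/2)(1 + ιζ²)x + (1/2)(1 - ιζ²)x³`, where `ι = ξ²`. -/
noncomputable def w2F (K : Type*) [Field K] (ξ ζ : K) : FirstAlg K ζ :=
  ((2 : K)⁻¹ * (1 + ξ ^ 2 * ζ ^ 2)) • xF K ζ +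
    ((2 : K)⁻¹ * (1 - ξ ^ 2 * ζ ^ 2)) • (xF K ζ ^ 3)

/-- `ω₃ := (1/2)(1 - ιζ²)x + (1/2)(1 + ιζ²)x³`, where `ι = ξ²`. -/
noncomputable def w3F (K : Type*) [Field K] (ξ ζ : K) : FirstAlg K ζ :=
  ((2 : K)⁻¹ * (1 - ξ ^ 2 * ζ ^ 2)) • xF K ζ +
    ((2 : K)⁻¹ * (1 + ξ ^ 2 * ζ ^ 2)) • (xF K ζ ^ 3)

/-- `ω₄ := x²`. -/
noncomputable def w4F (K : Type*) [Field K] (ζ : K) : FirstAlg K ζ := xF K ζ ^ 2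

/-- `η₁ := y`. -/
noncomputable def e1F (K : Type*) [Field K] (ζ : K) : FirstAlg K ζ := yF K ζ

/-- `η₂ := x³y`. -/
noncomputable def e2F (K : Type*) [Field K] (ζ : K) : FirstAlg K ζ := xF K ζ ^ 3 * yF K ζ

/-- `η₃ := x²y`. -/
noncomputable def e3F (K : Type*) [Field K] (ζ : K) : FirstAlg K ζ := xF K ζ ^ 2 * yF K ζ

/-- `η₄ := xy`. -/
noncomputable def e4F (K : Type*) [Field K] (ζ : K) : FirstAlg K ζ := xF K ζ * yF K ζ

set_option maxHeartbeats 1600000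

theorem stmt_9 {K : Type*} [Field K] (ξ : K) (hξ : IsPrimitiveRoot ξ 8)
    (ζ : K) (hζ : ζ ^ 4 = 1)
    (ρ : GG →* (FirstAlg K ζ →ₐ[K] FirstAlg K ζ))
    (hρ2x : ρ g2 (xF K ζ) = xF K ζ ^ 3) (hρ2y : ρ g2 (yF K ζ) = xF K ζ ^ 3 * yF K ζ)
    (hρ3x : ρ g3 (xF K ζ) = xF K ζ) (hρ3y : ρ g3 (yF K ζ) = xF K ζ ^ 2 * yF K ζ) :
    -- `ω₁` and `ω₄` are fixed points of the `G`-action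
    (∀ g : GG, ρ g (w1F K ζ) = w1F K ζ ∧ ρ g (w4F K ζ) = w4F K ζ) ∧
    -- `g₃.ωᵢ = ωᵢ` for all `i`
    (ρ g3 (w1F K ζ) = w1F K ζ ∧ ρ g3 (w2F K ξ ζ) = w2F K ξ ζ ∧
      ρ g3 (w3F K ξ ζ) = w3F K ξ ζ ∧ ρ g3 (w4F K ζ) = w4F K ζ) ∧
    -- `g₂.ω₂ = ω₃`
    ρ g2 (w2F K ξ ζ) = w3F K ξ ζ ∧
    -- `G` acts simply transitively on `{η₁, η₂, η₃, η₄}`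
    (∀ η : GG → FirstAlg K ζ,
      (η g1 = e1F K ζ ∧ η g2 = e2F K ζ ∧ η g3 = e3F K ζ ∧ η g4 = e4F K ζ) →
      ∀ i j : GG, ρ i (η j) = η (i * j)) := by
  set x := xF K ζ with hxdef
  set y := yF K ζ with hydef
  have hx4 : x ^ 4 = 1 := by
    rw [hxdef, xF, ← map_pow, ← map_one (Ideal.Quotient.mk (firstRelIdeal K ζ))]
    exact Ideal.Quotient.eq.mpr (Ideal.subset_span (by left; rfl))
  have hg1 : ∀ a : FirstAlg K ζ, ρ g1 a = a := by
    intro a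
    have h : g1 = (1 : GG) := rfl
    rw [h, map_one]; rfl
  have h24 : g2 * g3 = g4 := by decide
  have hρ4x : ρ g4 x = x ^ 3 := by
    rw [← h24, map_mul, AlgHom.mul_apply, hρ3x, hρ2x]
  have hρ4y : ρ g4 y = x * y := by
    rw [← h24, map_mul, AlgHom.mul_apply, hρ3y, map_mul, map_pow, hρ2x, hρ2y]
    linear_combination (x * y * (x ^ 4 + 1)) * hx4
  have hcases : ∀ g : GG, g = g1 ∨ g = g2 ∨ g = g3 ∨ g = g4 := by decide
  refine ⟨?_, ?_, ?_, ?_⟩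
  · intro g
    rcases hcases g with h | h | h | h <;> subst h
    · exact ⟨hg1 _, hg1 _⟩
    · constructor
      · rw [w1F, map_one]
      · rw [w4F, ← hxdef, map_pow, hρ2x]
        linear_combination (x ^ 2) * hx4
    · constructor
      · rw [w1F, map_one]
      · rw [w4F, ← hxdef, map_pow, hρ3x]
    · constructor
      · rw [w1F, map_one]
      · rw [w4F, ← hxdef, map_pow, hρ4x]
        linear_combination (x ^ 2) * hx4
  · refine ⟨by rw [w1F, map_one], ?_, ?_, by rw [w4F, ← hxdef, map_pow, hρ3x]⟩
    · rw [w2F, ← hxdef, map_add, map_smul, map_smul, map_pow, hρ3x]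
    · rw [w3F, ← hxdef, map_add, map_smul, map_smul, map_pow, hρ3x]
  · rw [w2F, w3F, ← hxdef, map_add, map_smul, map_smul, map_pow, hρ2x]
    have h9 : (x ^ 3) ^ 3 = x := by
      linear_combination (x * (x ^ 4 + 1)) * hx4
    rw [h9, add_comm]
  · rintro η ⟨h1, h2, h3, h4⟩ i j
    rcases hcases i with hi | hi | hi | hi <;> subst hi
    · rw [hg1, show g1 * j = j from one_mul j]
    · rcases hcases j with hj | hj | hj | hj <;> subst hj
      · rw [show g2 * g1 = g2 from mul_one g2, h1, h2, e1F, e2F, ← hxdef, ← hydef,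
          hρ2y]
      · rw [show g2 * g2 = g1 by decide, h2, h1, e1F, e2F, ← hxdef, ← hydef,
          map_mul, map_pow, hρ2x, hρ2y]
        linear_combination (y * (x ^ 8 + x ^ 4 + 1)) * hx4
      · rw [show g2 * g3 = g4 from h24, h3, h4, e3F, e4F, ← hxdef, ← hydef,
          map_mul, map_pow, hρ2x, hρ2y]
        linear_combination (x * y * (x ^ 4 + 1)) * hx4
      · rw [show g2 * g4 = g3 by decide, h4, h3, e3F, e4F, ← hxdef, ← hydef,
          map_mul, hρ2x, hρ2y]
        linear_combination (x ^ 2 * y) * hx4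
    · rcases hcases j with hj | hj | hj | hj <;> subst hj
      · rw [show g3 * g1 = g3 from mul_one g3, h1, h3, e1F, e3F, ← hxdef, ← hydef,
          hρ3y]
      · rw [show g3 * g2 = g4 by decide, h2, h4, e2F, e4F, ← hxdef, ← hydef,
          map_mul, map_pow, hρ3x, hρ3y]
        linear_combination (x * y) * hx4
      · rw [show g3 * g3 = g1 by decide, h3, h1, e1F, e3F, ← hxdef, ← hydef,
          map_mul, map_pow, hρ3x, hρ3y]
        linear_combination y * hx4
      · rw [show g3 * g4 = g2 by decide, h4, h2, e2F, e4F, ← hxdef, ← hydef,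
          map_mul, hρ3x, hρ3y]
        ring
    · rcases hcases j with hj | hj | hj | hj <;> subst hj
      · rw [show g4 * g1 = g4 from mul_one g4, h1, h4, e1F, e4F, ← hxdef, ← hydef,
          hρ4y]
      · rw [show g4 * g2 = g3 by decide, h2, h3, e2F, e3F, ← hxdef, ← hydef,
          map_mul, map_pow, hρ4x, hρ4y]
        linear_combination (x ^ 2 * y * (x ^ 4 + 1)) * hx4
      · rw [show g4 * g3 = g2 by decide, h3, h2, e2F, e3F, ← hxdef, ← hydef,
          map_mul, map_pow, hρ4x, hρ4y]
        linear_combination (x ^ 3 * y) * hx4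
      · rw [show g4 * g4 = g1 by decide, h4, h1, e1F, e4F, ← hxdef, ← hydef,
          map_mul, hρ4x, hρ4y]
        linear_combination y * hx4
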